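/- Let f : M → ℝ be a smooth function on a Riemannian manifold with ‖grad f(x)‖_x ≤ G for all x, and satisfying the geodesic smoothness bound |f(y) - f(x) - ⟨grad f(x), Exp_x^{-1}(y)⟩_x| ≤ (L/2)‖Exp_x^{-1}(y)‖_x². Suppose Retr is a retraction with d(x, Retr_x(η)) ≤ ‖η‖_x, and a second-order retraction: d(Retr_x(η), Exp_x(η)) ≤ C‖η‖_x². Assume further the comparison inequality ‖ξ - η‖_x ≤ d(Exp_x(ξ), Exp_x(η)) for tangent vectors ξ, η. Then for L' = L + GC: |f(Retr_x(η)) - f(x) - ⟨grad f(x), η⟩_x| ≤ (L'/2)·2‖η‖_x², i.e., f is retraction-smooth with constant 2(L + GC). -/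

import Mathlib

/-- Retraction smoothness from geodesic smoothness for a second-order retraction:
if `f` is geodesically `L`-smooth with gradient bounded by `G`, the retraction
satisfies `d(x, Retr_x η) ≤ ‖η‖` and the second-order condition
`d(Retr_x η, Exp_x η) ≤ C ‖η‖²`, and the curvature comparison inequality
`‖ξ - η‖ ≤ d(Exp_x ξ, Exp_x η)` holds, then
`|f(Retr_x η) - f(x) - ⟨grad f(x), η⟩| ≤ (L + G C) ‖η‖²`. -/
theorem retraction_smoothness {M : Type*} [MetricSpace M]
    {H : Type*} [NormedAddCommGroup H] [InnerProductSpace ℝ H]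
    (f : M → ℝ) (gradf : M → H) (Expm Retr : M → H → M) (ExpInv : M → M → H)
    (L G C : ℝ) (hL : 0 ≤ L) (hG : 0 ≤ G) (hC : 0 ≤ C)
    (hgrad : ∀ x, ‖gradf x‖ ≤ G)
    (hsmooth : ∀ x y, |f y - f x - (inner ℝ (gradf x) (ExpInv x y) : ℝ)| ≤
      L / 2 * ‖ExpInv x y‖ ^ 2)
    (hExpInv : ∀ x y, Expm x (ExpInv x y) = y)
    (hExpdist : ∀ x y, ‖ExpInv x y‖ = dist x y)
    (hretr : ∀ x η, dist x (Retr x η) ≤ ‖η‖)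
    (hso : ∀ x η, dist (Retr x η) (Expm x η) ≤ C * ‖η‖ ^ 2)
    (hcomp : ∀ x (ξ η : H), ‖ξ - η‖ ≤ dist (Expm x ξ) (Expm x η)) :
    ∀ x η, |f (Retr x η) - f x - (inner ℝ (gradf x) η : ℝ)| ≤ (L + G * C) * ‖η‖ ^ 2 := by
  intro x η
  set y := Retr x η with hy
  set ξ := ExpInv x y with hξ
  have hnξ : ‖ξ‖ ≤ ‖η‖ := by
    rw [hξ, hExpdist]; exact hretr x η
  have h1 : |f y - f x - (inner ℝ (gradf x) ξ : ℝ)| ≤ L / 2 * ‖η‖ ^ 2 := by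
    refine (hsmooth x y).trans ?_
    have : ‖ExpInv x y‖ ^ 2 ≤ ‖η‖ ^ 2 :=
      pow_le_pow_left₀ (norm_nonneg _) hnξ 2
    nlinarith
  have h2 : |(inner ℝ (gradf x) ξ : ℝ) - inner ℝ (gradf x) η| ≤ G * C * ‖η‖ ^ 2 := by
    have : (inner ℝ (gradf x) ξ : ℝ) - inner ℝ (gradf x) η = inner ℝ (gradf x) (ξ - η) := by
      rw [inner_sub_right]
    rw [this]
    calc |(inner ℝ (gradf x) (ξ - η) : ℝ)| ≤ ‖gradf x‖ * ‖ξ - η‖ :=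
          abs_real_inner_le_norm _ _
      _ ≤ G * (C * ‖η‖ ^ 2) := by
          refine mul_le_mul (hgrad x) ?_ (norm_nonneg _) hG
          calc ‖ξ - η‖ ≤ dist (Expm x ξ) (Expm x η) := hcomp x ξ η
            _ = dist y (Expm x η) := by rw [hξ, hExpInv]
            _ ≤ C * ‖η‖ ^ 2 := hso x η
      _ = G * C * ‖η‖ ^ 2 := by ring
  calc |f y - f x - (inner ℝ (gradf x) η : ℝ)|
      = |(f y - f x - (inner ℝ (gradf x) ξ : ℝ)) +
          ((inner ℝ (gradf x) ξ : ℝ) - inner ℝ (gradf x) η)| := by ring_nf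
    _ ≤ |f y - f x - (inner ℝ (gradf x) ξ : ℝ)| +
          |(inner ℝ (gradf x) ξ : ℝ) - inner ℝ (gradf x) η| := abs_add_le _ _
    _ ≤ L / 2 * ‖η‖ ^ 2 + G * C * ‖η‖ ^ 2 := add_le_add h1 h2
    _ ≤ (L + G * C) * ‖η‖ ^ 2 := by nlinarith [sq_nonneg ‖η‖]
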